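/- Let n be a natural number and let ε be a function assigning an element of ZMod 2 to each edge of the graph 𝒢ₙ. If for every triangle of 𝒢ₙ (three pairwise adjacent vertices Q₁, Q₂, Q₃) one has ε({Q₁,Q₂}) + ε({Q₂,Q₃}) + ε({Q₁,Q₃}) = 0, then for every cycle of 𝒢ₙ the sum of ε over the edges of the cycle is 0. (Equivalently, the cycle space of 𝒢ₙ over ZMod 2 is generated by its triangles.) -/

import Mathlib

/-- The graph `𝒢ₙ` whose vertices are the 5-element subsets of `Fin n`,
with `Q, Q'` adjacent iff `|Q ∩ Q'| = 4`. -/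
def ATGraph (n : ℕ) : SimpleGraph {Q : Finset (Fin n) // Q.card = 5} where
  Adj Q Q' := (Q.1 ∩ Q'.1).card = 4
  symm := by
    constructor
    intro Q Q' h
    rwa [Finset.inter_comm]
  loopless := by
    constructor
    intro Q h
    rw [Finset.inter_self, Q.2] at h
    exact absurd h (by norm_num)


namespace ATProof

variable {n : ℕ}

lemma swap_decomp {S Y : Finset (Fin n)} (hS : S.card = 5) (hY : Y.card = 5)
    (h : (S ∩ Y).card = 4) :
    ∃ a b, a ∈ S ∧ b ∉ S ∧ Y = insert b (S.erase a) := by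
  have h1 : (S \ Y).card = 1 := by
    have := Finset.card_inter_add_card_sdiff S Y; omega
  have h2 : (Y \ S).card = 1 := by
    have := Finset.card_inter_add_card_sdiff Y S
    rw [Finset.inter_comm] at this; omega
  obtain ⟨a, ha⟩ := Finset.card_eq_one.mp h1
  obtain ⟨b, hb⟩ := Finset.card_eq_one.mp h2
  have haS : a ∈ S \ Y := ha ▸ Finset.mem_singleton_self a
  have hbY : b ∈ Y \ S := hb ▸ Finset.mem_singleton_self b
  refine ⟨a, b, (Finset.mem_sdiff.mp haS).1, (Finset.mem_sdiff.mp hbY).2, ?_⟩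
  have e1 : S.erase a = S ∩ Y := by
    rw [Finset.erase_eq, ← ha, Finset.sdiff_sdiff_self_left]
  rw [e1, Finset.insert_eq, ← hb, Finset.inter_comm, Finset.sdiff_union_inter]

lemma card_inter_erase (P S : Finset (Fin n)) {a : Fin n} (ha : a ∈ S) :
    (P ∩ S.erase a).card + (if a ∈ P then 1 else 0) = (P ∩ S).card := by
  rw [Finset.inter_erase]
  by_cases haP : a ∈ P
  · rw [if_pos haP, Finset.card_erase_of_mem (Finset.mem_inter.2 ⟨haP, ha⟩)]
    have : 0 < (P ∩ S).card := Finset.card_pos.2 ⟨a, Finset.mem_inter.2 ⟨haP, ha⟩⟩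
    omega
  · rw [if_neg haP, Finset.erase_eq_of_notMem (fun hx => haP (Finset.mem_inter.1 hx).1)]
    omega

lemma card_inter_insert (P T : Finset (Fin n)) {b : Fin n} (hb : b ∉ T) :
    (P ∩ insert b T).card = (P ∩ T).card + (if b ∈ P then 1 else 0) := by
  by_cases hbP : b ∈ P
  · rw [Finset.inter_insert_of_mem hbP,
      Finset.card_insert_of_notMem (fun hx => hb (Finset.mem_inter.1 hx).2), if_pos hbP]
  · rw [Finset.inter_insert_of_notMem hbP, if_neg hbP]; omega

lemma card_inter_swap (P S : Finset (Fin n)) {a b : Fin n} (ha : a ∈ S) (hb : b ∉ S) :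
    (P ∩ insert b (S.erase a)).card + (if a ∈ P then 1 else 0)
      = (P ∩ S).card + (if b ∈ P then 1 else 0) := by
  rw [card_inter_insert P _ (fun hx => hb (Finset.mem_of_mem_erase hx))]
  have := card_inter_erase P S ha
  omega

lemma exists_M {P S Y Z : Finset (Fin n)} (hP : P.card = 5) (hS : S.card = 5)
    (hY : Y.card = 5) (hZ : Z.card = 5)
    (hSY : (S ∩ Y).card = 4) (hSZ : (S ∩ Z).card = 4)
    (hYZne : Y ≠ Z) (hYZ : (Y ∩ Z).card ≠ 4)
    (h1 : (P ∩ S).card ≤ (P ∩ Y).card) (h2 : (P ∩ S).card < (P ∩ Z).card) :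
    ∃ M : Finset (Fin n), M.card = 5 ∧ (M ∩ S).card = 4 ∧ (M ∩ Y).card = 4 ∧
      (M ∩ Z).card = 4 ∧ (P ∩ M).card = (P ∩ S).card + 1 := by
  obtain ⟨a, b, haS, hbS, hYdef⟩ := swap_decomp hS hY hSY
  obtain ⟨c, d, hcS, hdS, hZdef⟩ := swap_decomp hS hZ hSZ
  have hbig : ∀ W : Finset (Fin n), W ⊆ Y ∩ Z → W.card = 4 → False := by
    intro W hW hW4
    have h4 : 4 ≤ (Y ∩ Z).card := hW4 ▸ Finset.card_le_card hW
    have h5 : (Y ∩ Z).card ≤ 5 := hY ▸ Finset.card_le_card Finset.inter_subset_left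
    have h45 : (Y ∩ Z).card = 5 := by omega
    have e1 : Y ∩ Z = Y := Finset.eq_of_subset_of_card_le Finset.inter_subset_left (by omega)
    have e2 : Y ∩ Z = Z := Finset.eq_of_subset_of_card_le Finset.inter_subset_right (by omega)
    exact hYZne (e1 ▸ e2)
  have hac : a ≠ c := by
    rintro rfl
    refine hbig (S.erase a) (Finset.subset_inter ?_ ?_) (by rw [Finset.card_erase_of_mem haS, hS])
    · rw [hYdef]; exact Finset.subset_insert _ _
    · rw [hZdef]; exact Finset.subset_insert _ _
  have hbd : b ≠ d := by
    rintro rfl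
    refine hbig (insert b ((S.erase a).erase c)) ?_ ?_
    · intro x hx
      rcases Finset.mem_insert.mp hx with rfl | hx
      · rw [Finset.mem_inter, hYdef, hZdef]
        exact ⟨Finset.mem_insert_self _ _, Finset.mem_insert_self _ _⟩
      · have hxa := Finset.mem_of_mem_erase hx
        have hxc : x ≠ c := (Finset.mem_erase.mp hx).1
        rw [Finset.mem_inter, hYdef, hZdef]
        exact ⟨Finset.mem_insert_of_mem hxa,
          Finset.mem_insert_of_mem (Finset.mem_erase.mpr ⟨hxc, Finset.mem_of_mem_erase hxa⟩)⟩
    · rw [Finset.card_insert_of_notMem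
        (fun hx => hbS (Finset.mem_of_mem_erase (Finset.mem_of_mem_erase hx))),
        Finset.card_erase_of_mem (Finset.mem_erase.mpr ⟨Ne.symm hac, hcS⟩),
        Finset.card_erase_of_mem haS, hS]
  have hcntY := card_inter_swap P S haS hbS
  rw [← hYdef] at hcntY
  have hcntZ := card_inter_swap P S hcS hdS
  rw [← hZdef] at hcntZ
  have hdP : d ∈ P := by
    by_contra hdP; simp only [hdP, if_false] at hcntZ; split_ifs at hcntZ <;> omega
  have hcP : c ∉ P := by intro hcP; simp only [hcP, hdP, if_true] at hcntZ; omega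
  have hEaux : ∀ (u w : Fin n), u ≠ w →
      S.erase u ∩ S.erase w = (S.erase u).erase w := by
    intro u w huw
    rw [Finset.inter_erase, Finset.inter_eq_left.mpr (Finset.erase_subset _ _)]
  by_cases haP : a ∈ P
  · have hbP : b ∈ P := by
      by_contra hbP; simp only [haP, hbP, if_true, if_false] at hcntY; omega
    refine ⟨insert b (S.erase c), ?_, ?_, ?_, ?_, ?_⟩
    · rw [Finset.card_insert_of_notMem (fun hx => hbS (Finset.mem_of_mem_erase hx)),
        Finset.card_erase_of_mem hcS, hS]
    · rw [Finset.insert_inter_of_notMem hbS,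
        Finset.inter_eq_left.mpr (Finset.erase_subset _ _),
        Finset.card_erase_of_mem hcS, hS]
    · rw [hYdef, Finset.insert_inter_of_mem (Finset.mem_insert_self _ _),
        Finset.inter_insert_of_notMem (fun hx => hbS (Finset.mem_of_mem_erase hx)),
        hEaux c a (Ne.symm hac),
        Finset.card_insert_of_notMem
          (fun hx => hbS (Finset.mem_of_mem_erase (Finset.mem_of_mem_erase hx))),
        Finset.card_erase_of_mem (Finset.mem_erase.mpr ⟨hac, haS⟩),
        Finset.card_erase_of_mem hcS, hS]
    · rw [hZdef, Finset.insert_inter_of_notMem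
          (by simp only [Finset.mem_insert]
              rintro (h | h)
              · exact hbd h
              · exact hbS (Finset.mem_of_mem_erase h)),
        Finset.inter_insert_of_notMem (fun hx => hdS (Finset.mem_of_mem_erase hx)),
        Finset.inter_self, Finset.card_erase_of_mem hcS, hS]
    · have := card_inter_swap P S hcS hbS
      simp only [hcP, hbP, if_true, if_false] at this
      omega
  · refine ⟨insert d (S.erase a), ?_, ?_, ?_, ?_, ?_⟩
    · rw [Finset.card_insert_of_notMem (fun hx => hdS (Finset.mem_of_mem_erase hx)),
        Finset.card_erase_of_mem haS, hS]
    · rw [Finset.insert_inter_of_notMem hdS,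
        Finset.inter_eq_left.mpr (Finset.erase_subset _ _),
        Finset.card_erase_of_mem haS, hS]
    · rw [hYdef, Finset.insert_inter_of_notMem
          (by simp only [Finset.mem_insert]
              rintro (h | h)
              · exact hbd h.symm
              · exact hdS (Finset.mem_of_mem_erase h)),
        Finset.inter_insert_of_notMem (fun hx => hbS (Finset.mem_of_mem_erase hx)),
        Finset.inter_self, Finset.card_erase_of_mem haS, hS]
    · rw [hZdef, Finset.insert_inter_of_mem (Finset.mem_insert_self _ _),
        Finset.inter_insert_of_notMem (fun hx => hdS (Finset.mem_of_mem_erase hx)),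
        hEaux a c hac,
        Finset.card_insert_of_notMem
          (fun hx => hdS (Finset.mem_of_mem_erase (Finset.mem_of_mem_erase hx))),
        Finset.card_erase_of_mem (Finset.mem_erase.mpr ⟨Ne.symm hac, hcS⟩),
        Finset.card_erase_of_mem haS, hS]
    · have := card_inter_swap P S haS hdS
      simp only [haP, hdP, if_true, if_false] at this
      omega



def esum {α : Type*} (ε : Sym2 α → ZMod 2) : List α → ZMod 2
  | [] => 0
  | [_] => 0
  | x :: y :: t => ε s(x, y) + esum ε (y :: t)

lemma esum_append {α : Type*} (ε : Sym2 α → ZMod 2) :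
    ∀ (a : List α) (y : α) (b : List α),
      esum ε (a ++ y :: b) = esum ε (a ++ [y]) + esum ε (y :: b)
  | [], y, b => by simp [esum]
  | [x], y, b => by simp [esum]
  | x :: x' :: a, y, b => by
    have h1 := esum_append ε (x' :: a) y b
    have e1 : esum ε ((x :: x' :: a) ++ y :: b) = ε s(x, x') + esum ε ((x' :: a) ++ y :: b) := rfl
    have e2 : esum ε ((x :: x' :: a) ++ [y]) = ε s(x, x') + esum ε ((x' :: a) ++ [y]) := rfl
    rw [e1, e2, h1, add_assoc]

lemma head?_same {α : Type*} (l₁ : List α) (a : α) (A B : List α) :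
    (l₁ ++ a :: A).head? = (l₁ ++ a :: B).head? := by
  cases l₁ <;> simp

lemma exists_descent {α : Type*} (f : α → ℕ) :
    ∀ (l : List α) (Y S : α), f Y ≤ f S → (∃ z ∈ l, f z < f S) →
      ∃ l₁ Y' S' Z' l₂, Y :: S :: l = l₁ ++ Y' :: S' :: Z' :: l₂ ∧
        f Y' ≤ f S' ∧ f Z' < f S' := by
  intro l
  induction l with
  | nil =>
    intro Y S _ h
    obtain ⟨z, hz, _⟩ := h
    simp at hz
  | cons Zc t ih =>
    intro Y S hYS h
    by_cases hZ : f Zc < f S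
    · exact ⟨[], Y, S, Zc, t, rfl, hYS, hZ⟩
    · push_neg at hZ
      obtain ⟨z, hz, hlt⟩ := h
      have hz' : z ∈ t := by
        rcases List.mem_cons.mp hz with rfl | h'
        · exact absurd hlt (by omega)
        · exact h'
      obtain ⟨l₁, Y', S', Z', l₂, heq, ha, hb⟩ := ih S Zc hZ ⟨z, hz', by omega⟩
      exact ⟨Y :: l₁, Y', S', Z', l₂, by rw [List.cons_append, ← heq], ha, hb⟩

lemma walk_getLast {V : Type*} {G : SimpleGraph V} :
    ∀ {u v : V} (w : G.Walk u v), w.support.getLast? = some v := by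
  intro u v w
  induction w with
  | nil => simp
  | @cons u x v h p ih =>
    rw [SimpleGraph.Walk.support_cons, p.support_eq_cons, List.getLast?_cons_cons,
      ← p.support_eq_cons, ih]

lemma esum_edges {V : Type*} {G : SimpleGraph V} (ε : Sym2 V → ZMod 2) :
    ∀ {u v : V} (w : G.Walk u v), (w.edges.map ε).sum = esum ε w.support := by
  intro u v w
  induction w with
  | nil => simp [esum]
  | @cons u x v h p ih =>
    rw [SimpleGraph.Walk.edges_cons, SimpleGraph.Walk.support_cons, List.map_cons,
      List.sum_cons, ih, p.support_eq_cons]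
    simp [esum]

lemma main_lemma {n : ℕ} (ε : Sym2 {Q : Finset (Fin n) // Q.card = 5} → ZMod 2)
    (htri : ∀ Q₁ Q₂ Q₃, (ATGraph n).Adj Q₁ Q₂ → (ATGraph n).Adj Q₂ Q₃ →
      (ATGraph n).Adj Q₁ Q₃ → ε s(Q₁, Q₂) + ε s(Q₂, Q₃) + ε s(Q₁, Q₃) = 0)
    (P : {Q : Finset (Fin n) // Q.card = 5}) :
    ∀ (N : ℕ) (l : List {Q : Finset (Fin n) // Q.card = 5}),
      (l.map (fun v => 6 ^ (5 - (P.1 ∩ v.1).card))).sum ≤ N →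
      List.Chain' (ATGraph n).Adj l → l.head? = some P → l.getLast? = some P →
      esum ε l = 0 := by
  have hcard : ∀ v : {Q : Finset (Fin n) // Q.card = 5}, (P.1 ∩ v.1).card ≤ 5 := by
    intro v
    calc (P.1 ∩ v.1).card ≤ P.1.card := Finset.card_le_card Finset.inter_subset_left
    _ = 5 := P.2
  have hfP : (5 - (P.1 ∩ P.1).card) = 0 := by rw [Finset.inter_self, P.2]
  intro N
  induction N with
  | zero =>
    intro l hΦ hch hh hl
    cases l with
    | nil => simp at hh
    | cons x t =>
      exfalso
      rw [List.map_cons, List.sum_cons] at hΦ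
      have : 0 < 6 ^ (5 - (P.1 ∩ x.1).card) := pow_pos (by norm_num) _
      omega
  | succ N ih =>
    intro l hΦ hch hh hl
    set f : {Q : Finset (Fin n) // Q.card = 5} → ℕ := fun v => 5 - (P.1 ∩ v.1).card with hf
    rcases l with _ | ⟨x, _ | ⟨y, _ | ⟨z, t⟩⟩⟩
    · simp [esum]
    · simp [esum]
    · -- [x, y] : impossible
      have hx : x = P := by simpa using hh
      have hy : y = P := by simpa using hl
      have hadj : (ATGraph n).Adj x y := (List.isChain_cons_cons.mp hch).1
      rw [hx, hy] at hadj
      exact absurd hadj ((ATGraph n).loopless.irrefl P)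
    · -- length ≥ 4
      have hx : x = P := by simpa using hh
      subst hx
      have hadj1 : (ATGraph n).Adj x y := (List.isChain_cons_cons.mp hch).1
      have hfy : f y = 1 := by
        have h4 : (x.1 ∩ y.1).card = 4 := hadj1
        simp only [hf]
        omega
      have hlast' : (z :: t).getLast? = some x := by
        rw [List.getLast?_cons_cons, List.getLast?_cons_cons] at hl
        exact hl
      have hPmem : x ∈ z :: t := by
        obtain ⟨hne, heq⟩ := List.mem_getLast?_eq_getLast (Option.mem_def.mpr hlast')
        exact heq ▸ List.getLast_mem hne
      obtain ⟨l₁, Y, S, Z, l₂, heq, hfYS, hfZS⟩ :=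
        exists_descent f (z :: t) x y (by simp only [hf, hfP]; omega)
          ⟨x, hPmem, by simp only [hf, hfP] at *; omega⟩
      rw [heq] at hΦ hch hh hl ⊢
      obtain ⟨hch1, hch2, hch3⟩ := List.isChain_append.mp hch
      obtain ⟨hYS, hch2'⟩ := List.isChain_cons_cons.mp hch2
      obtain ⟨hSZ, hchZ⟩ := List.isChain_cons_cons.mp hch2'
      rw [List.getLast?_append_cons, List.getLast?_cons_cons, List.getLast?_cons_cons] at hl
      simp only [List.map_append, List.sum_append, List.map_cons, List.sum_cons] at hΦ
      have hes : ∀ (A : List {Q : Finset (Fin n) // Q.card = 5}),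
          esum ε (l₁ ++ Y :: A) = esum ε (l₁ ++ [Y]) + esum ε (Y :: A) :=
        fun A => esum_append ε l₁ Y A
      have hpow1 : ∀ k : ℕ, 1 ≤ (6:ℕ) ^ k := fun k => Nat.one_le_pow _ _ (by norm_num)
      by_cases hYZeq : Y = Z
      · -- case A : backtrack
        subst hYZeq
        have hch' : List.Chain' (ATGraph n).Adj (l₁ ++ Y :: l₂) :=
          List.IsChain.append hch1 hchZ hch3
        have hh' : (l₁ ++ Y :: l₂).head? = some x := by
          rw [head?_same l₁ Y l₂ (S :: Y :: l₂)]; exact hh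
        have hl' : (l₁ ++ Y :: l₂).getLast? = some x := by
          rw [List.getLast?_append_cons]; exact hl
        have hΦ' : ((l₁ ++ Y :: l₂).map (fun v => 6 ^ (5 - (x.1 ∩ v.1).card))).sum ≤ N := by
          simp only [List.map_append, List.sum_append, List.map_cons, List.sum_cons]
          have h1 := hpow1 (5 - (x.1 ∩ S.1).card)
          have h2 := hpow1 (5 - (x.1 ∩ Y.1).card)
          omega
        have hrec := ih (l₁ ++ Y :: l₂) hΦ' hch' hh' hl'
        rw [hes (S :: Y :: l₂)]
        rw [hes l₂] at hrec
        have e1 : esum ε (Y :: S :: Y :: l₂) = ε s(Y, S) + (ε s(S, Y) + esum ε (Y :: l₂)) := rfl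
        rw [e1, Sym2.eq_swap (a := S) (b := Y)]
        revert hrec
        generalize esum ε (l₁ ++ [Y]) = E
        generalize ε s(Y, S) = u
        generalize esum ε (Y :: l₂) = R
        revert E u R; decide
      · by_cases hYZadj : (ATGraph n).Adj Y Z
        · -- case B : shortcut
          have hch' : List.Chain' (ATGraph n).Adj (l₁ ++ Y :: Z :: l₂) :=
            List.IsChain.append hch1 (List.isChain_cons_cons.mpr ⟨hYZadj, hchZ⟩) hch3
          have hh' : (l₁ ++ Y :: Z :: l₂).head? = some x := by
            rw [head?_same l₁ Y (Z :: l₂) (S :: Z :: l₂)]; exact hh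
          have hl' : (l₁ ++ Y :: Z :: l₂).getLast? = some x := by
            rw [List.getLast?_append_cons, List.getLast?_cons_cons]; exact hl
          have hΦ' : ((l₁ ++ Y :: Z :: l₂).map (fun v => 6 ^ (5 - (x.1 ∩ v.1).card))).sum ≤ N := by
            simp only [List.map_append, List.sum_append, List.map_cons, List.sum_cons]
            have h1 := hpow1 (5 - (x.1 ∩ S.1).card)
            omega
          have hrec := ih (l₁ ++ Y :: Z :: l₂) hΦ' hch' hh' hl'
          have htr := htri Y S Z hYS hSZ hYZadj
          rw [hes (S :: Z :: l₂)]
          rw [hes (Z :: l₂)] at hrec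
          have e1 : esum ε (Y :: S :: Z :: l₂) = ε s(Y, S) + (ε s(S, Z) + esum ε (Z :: l₂)) := rfl
          have e2 : esum ε (Y :: Z :: l₂) = ε s(Y, Z) + esum ε (Z :: l₂) := rfl
          rw [e1]; rw [e2] at hrec
          revert hrec htr
          generalize esum ε (l₁ ++ [Y]) = E
          generalize ε s(Y, S) = a
          generalize ε s(S, Z) = b
          generalize ε s(Y, Z) = c
          generalize esum ε (Z :: l₂) = R
          revert E a b c R; decide
        · -- case C : reroute through M
          have hSY' : (S.1 ∩ Y.1).card = 4 := by
            rw [Finset.inter_comm]; exact hYS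
          have hSZ' : (S.1 ∩ Z.1).card = 4 := hSZ
          have hYZne : Y.1 ≠ Z.1 := fun h => hYZeq (Subtype.ext h)
          have hYZcard : (Y.1 ∩ Z.1).card ≠ 4 := hYZadj
          have h1 : (x.1 ∩ S.1).card ≤ (x.1 ∩ Y.1).card := by
            have b1 := hcard S; have b2 := hcard Y
            simp only [hf] at hfYS; omega
          have h2 : (x.1 ∩ S.1).card < (x.1 ∩ Z.1).card := by
            have b1 := hcard S; have b2 := hcard Z
            simp only [hf] at hfZS; omega
          obtain ⟨M0, hM5, hMS, hMY, hMZ, hPM⟩ :=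
            exists_M x.2 S.2 Y.2 Z.2 hSY' hSZ' hYZne hYZcard h1 h2
          set M : {Q : Finset (Fin n) // Q.card = 5} := ⟨M0, hM5⟩ with hMdef
          have hSM : (ATGraph n).Adj S M := by
            show (S.1 ∩ M0).card = 4
            rw [Finset.inter_comm]; exact hMS
          have hYM : (ATGraph n).Adj Y M := by
            show (Y.1 ∩ M0).card = 4
            rw [Finset.inter_comm]; exact hMY
          have hMZ' : (ATGraph n).Adj M Z := hMZ
          have hZM : (ATGraph n).Adj Z M := by
            show (Z.1 ∩ M0).card = 4
            rw [Finset.inter_comm]; exact hMZ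
          have hch' : List.Chain' (ATGraph n).Adj (l₁ ++ Y :: M :: Z :: l₂) :=
            List.IsChain.append hch1
              (List.isChain_cons_cons.mpr ⟨hYM, List.isChain_cons_cons.mpr ⟨hMZ', hchZ⟩⟩) hch3
          have hh' : (l₁ ++ Y :: M :: Z :: l₂).head? = some x := by
            rw [head?_same l₁ Y (M :: Z :: l₂) (S :: Z :: l₂)]; exact hh
          have hl' : (l₁ ++ Y :: M :: Z :: l₂).getLast? = some x := by
            rw [List.getLast?_append_cons, List.getLast?_cons_cons,
              List.getLast?_cons_cons]; exact hl
          have hΦ' : ((l₁ ++ Y :: M :: Z :: l₂).map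
              (fun v => 6 ^ (5 - (x.1 ∩ v.1).card))).sum ≤ N := by
            simp only [List.map_append, List.sum_append, List.map_cons, List.sum_cons]
            have b1 := hcard S; have b2 := hcard Z
            have hcS4 : (x.1 ∩ S.1).card ≤ 4 := by
              simp only [hf] at hfZS; omega
            have hMeq : (x.1 ∩ M.1).card = (x.1 ∩ S.1).card + 1 := hPM
            have e5 : 5 - (x.1 ∩ M.1).card = 4 - (x.1 ∩ S.1).card := by omega
            have e6 : 5 - (x.1 ∩ S.1).card = (4 - (x.1 ∩ S.1).card) + 1 := by omega
            rw [e5]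
            rw [e6, pow_succ] at hΦ
            have h1 := hpow1 (4 - (x.1 ∩ S.1).card)
            omega
          have hrec := ih (l₁ ++ Y :: M :: Z :: l₂) hΦ' hch' hh' hl'
          have htr1 := htri Y S M hYS hSM hYM
          have htr2 := htri S Z M hSZ hZM hSM
          rw [hes (S :: Z :: l₂)]
          rw [hes (M :: Z :: l₂)] at hrec
          have e1 : esum ε (Y :: S :: Z :: l₂) = ε s(Y, S) + (ε s(S, Z) + esum ε (Z :: l₂)) := rfl
          have e2 : esum ε (Y :: M :: Z :: l₂) = ε s(Y, M) + (ε s(M, Z) + esum ε (Z :: l₂)) := rfl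
          rw [e1]; rw [e2, Sym2.eq_swap (a := M) (b := Z)] at hrec
          revert hrec htr1 htr2
          generalize esum ε (l₁ ++ [Y]) = E
          generalize ε s(Y, S) = a
          generalize ε s(S, Z) = b
          generalize ε s(Y, M) = c
          generalize ε s(Z, M) = d
          generalize ε s(S, M) = e
          generalize esum ε (Z :: l₂) = R
          revert E a b c d e R; decide

end ATProof

/-- If `ε` sums to zero on every triangle of `𝒢ₙ`, then `ε` sums to zero on the
edges of every cycle of `𝒢ₙ`. -/
theorem stmt0 (n : ℕ)
    (ε : Sym2 {Q : Finset (Fin n) // Q.card = 5} → ZMod 2)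
    (htri : ∀ Q₁ Q₂ Q₃, (ATGraph n).Adj Q₁ Q₂ → (ATGraph n).Adj Q₂ Q₃ →
      (ATGraph n).Adj Q₁ Q₃ → ε s(Q₁, Q₂) + ε s(Q₂, Q₃) + ε s(Q₁, Q₃) = 0)
    (v : {Q : Finset (Fin n) // Q.card = 5}) (w : (ATGraph n).Walk v v)
    (hw : w.IsCycle) :
    (w.edges.map ε).sum = 0 := by
  rw [ATProof.esum_edges ε w]
  exact ATProof.main_lemma ε htri v _ w.support le_rfl w.isChain_adj_support
    (by rw [w.support_eq_cons]; rfl) (ATProof.walk_getLast w)
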